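/- (Lemma 2, frequency-offset form of the quadratic form.) Let L ≥ 1 be an integer, X ∈ ℂ^{L×L} Hermitian, p ∈ ℂ^L and ω ∈ ℝ, and let p(ω) = diag(τ(ω)) p where τ(ω) = (e^{i(ℓ−1)ω})_{ℓ=1}^{L}. Then p(ω)^H X p(ω) = 2 · Re( τ(ω)^T · (Ψ(X) ⊙ Ψ(p^* p^T))^T · 1_L ), where ⊙ is the entrywise matrix product and 1_L the all-one vector. -/

import Mathlib

open Matrix

/-- The `k`-th super-diagonal vector `ψ_k(B)` (0-based `k`): entry `ℓ` equals
`c_k · B_{ℓ, ℓ+k}` when `ℓ + k < K` and `0` otherwise, where `c_0 = √2/2` and `c_k = 1`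
for `k ≥ 1` (this matches the paper's 1-based `ψ_{k+1}`). -/
noncomputable def psi (K : ℕ) (k : Fin K) (B : Matrix (Fin K) (Fin K) ℂ) : Fin K → ℂ :=
  fun ℓ =>
    if h : (ℓ : ℕ) + (k : ℕ) < K then
      (if (k : ℕ) = 0 then ((Real.sqrt 2 / 2 : ℝ) : ℂ) else 1) * B ℓ ⟨(ℓ : ℕ) + (k : ℕ), h⟩
    else 0

/-- `Ψ(B)`: the matrix whose `k`-th column is `ψ_k(B)`. -/
noncomputable def bigPsi (K : ℕ) (B : Matrix (Fin K) (Fin K) ℂ) : Matrix (Fin K) (Fin K) ℂ :=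
  Matrix.of fun ℓ k => psi K k B ℓ

/-- The `K`-dimensional DFT matrix (0-based indices): `F_{n,m} = e^{-2πi·n·m/K}`. -/
noncomputable def dft (K : ℕ) : Matrix (Fin K) (Fin K) ℂ :=
  Matrix.of fun n m : Fin K =>
    Complex.exp (-(2 * (Real.pi : ℂ) * Complex.I * ((n : ℕ) : ℂ) * ((m : ℕ) : ℂ)) / (K : ℂ))

/-- The zero-padded, time-shifted pilot `p(t) ∈ ℂ^{L+D}` (0-based): entry `k` equals
`p_{k-t}` when `t ≤ k < t + L` and `0` otherwise. -/
def shiftPad (L D : ℕ) (p : Fin L → ℂ) (t : ℕ) : Fin (L + D) → ℂ :=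
  fun k => if h : t ≤ (k : ℕ) ∧ (k : ℕ) - t < L then p ⟨(k : ℕ) - t, h.2⟩ else 0


theorem stmt_13 (L : ℕ) (hL : 1 ≤ L) (X : Matrix (Fin L) (Fin L) ℂ) (hX : X.IsHermitian)
    (p : Fin L → ℂ) (ω : ℝ) :
    star (fun ℓ : Fin L => Complex.exp (Complex.I * ((ℓ : ℕ) : ℂ) * (ω : ℂ)) * p ℓ) ⬝ᵥ
        X *ᵥ (fun ℓ : Fin L => Complex.exp (Complex.I * ((ℓ : ℕ) : ℂ) * (ω : ℂ)) * p ℓ)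
      = ((2 * ((fun ℓ : Fin L => Complex.exp (Complex.I * ((ℓ : ℕ) : ℂ) * (ω : ℂ))) ⬝ᵥ
            (Matrix.hadamard (bigPsi L X) (bigPsi L (vecMulVec (star p) p)))ᵀ *ᵥ
              fun _ => (1 : ℂ)).re : ℝ) : ℂ) := by
  classical
  have hτconj : ∀ a b : ℕ,
      (starRingEnd ℂ) (Complex.exp (Complex.I * (a : ℂ) * (ω : ℂ))) *
        Complex.exp (Complex.I * (((a + b : ℕ)) : ℂ) * (ω : ℂ))
        = Complex.exp (Complex.I * (b : ℂ) * (ω : ℂ)) := by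
    intro a b
    rw [← Complex.exp_conj, ← Complex.exp_add]
    congr 1
    simp only [_root_.map_mul, Complex.conj_I, Complex.conj_ofReal, map_natCast]
    push_cast
    ring
  have hXc : ∀ a b : Fin L, (starRingEnd ℂ) (X a b) = X b a := by
    intro a b
    conv_rhs => rw [← hX]
    simp [Matrix.conjTranspose_apply]
  set F : Fin L × Fin L → ℂ := fun q =>
    (starRingEnd ℂ) (Complex.exp (Complex.I * ((q.1 : ℕ) : ℂ) * (ω : ℂ)) * p q.1) *
      X q.1 q.2 * (Complex.exp (Complex.I * ((q.2 : ℕ) : ℂ) * (ω : ℂ)) * p q.2) with hFdef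
  set w : Fin L × Fin L → ℂ := fun q => if q.1 = q.2 then (1/2 : ℂ) else 1 with hw
  set A : Finset (Fin L × Fin L) := Finset.univ.filter (fun q => q.1 ≤ q.2) with hA
  set D : Finset (Fin L × Fin L) := Finset.univ.filter (fun q => q.1 = q.2) with hD
  set U : Finset (Fin L × Fin L) := Finset.univ.filter (fun q => q.1 < q.2) with hU
  set S : ℂ := ((fun ℓ : Fin L => Complex.exp (Complex.I * ((ℓ : ℕ) : ℂ) * (ω : ℂ))) ⬝ᵥ
      (Matrix.hadamard (bigPsi L X) (bigPsi L (vecMulVec (star p) p)))ᵀ *ᵥ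
        fun _ => (1 : ℂ)) with hSdef
  have hconv : ((2 * S.re : ℝ) : ℂ) = S + (starRingEnd ℂ) S := by
    rw [Complex.add_conj]
  rw [hconv]
  -- LHS as a double sum
  have hLHS : star (fun ℓ : Fin L => Complex.exp (Complex.I * ((ℓ : ℕ) : ℂ) * (ω : ℂ)) * p ℓ) ⬝ᵥ
      X *ᵥ (fun ℓ : Fin L => Complex.exp (Complex.I * ((ℓ : ℕ) : ℂ) * (ω : ℂ)) * p ℓ)
      = ∑ q : Fin L × Fin L, F q := by
    rw [Fintype.sum_prod_type]
    simp only [dotProduct, Matrix.mulVec, Pi.star_apply, Finset.mul_sum]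
    refine Finset.sum_congr rfl fun ℓ _ => Finset.sum_congr rfl fun m _ => ?_
    simp only [hFdef, RCLike.star_def]
    ring
  -- S as a weighted sum over the upper triangle
  have hS_sum : S = ∑ q ∈ A, w q * F q := by
    rw [hSdef]
    simp only [dotProduct, Matrix.mulVec, Matrix.transpose_apply,
      Matrix.hadamard_apply, mul_one, Finset.mul_sum]
    rw [← Finset.sum_product']
    rw [show (Finset.univ : Finset (Fin L)) ×ˢ (Finset.univ : Finset (Fin L))
        = (Finset.univ : Finset (Fin L × Fin L)) from rfl]
    rw [← Finset.sum_filter_of_ne (s := (Finset.univ : Finset (Fin L × Fin L)))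
      (p := fun r => (r.2 : ℕ) + (r.1 : ℕ) < L)
      (f := fun r => Complex.exp (Complex.I * ((r.1 : ℕ) : ℂ) * (ω : ℂ)) *
        (bigPsi L X r.2 r.1 * bigPsi L (vecMulVec (star p) p) r.2 r.1))
      (by
        intro r _ hne
        by_contra h
        apply hne
        simp [bigPsi, psi, h])]
    refine Finset.sum_nbij'
      (i := fun r => if h : (r.2 : ℕ) + (r.1 : ℕ) < L then
        ((r.2, (⟨(r.2 : ℕ) + (r.1 : ℕ), h⟩ : Fin L)) : Fin L × Fin L) else r)
      (j := fun q => ((⟨(q.2 : ℕ) - (q.1 : ℕ),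
        lt_of_le_of_lt (Nat.sub_le _ _) q.2.isLt⟩ : Fin L), q.1))
      ?_ ?_ ?_ ?_ ?_
    · intro r hr
      rw [Finset.mem_filter] at hr
      rw [dif_pos hr.2, hA, Finset.mem_filter]
      exact ⟨Finset.mem_univ _, by simp [Fin.le_def]⟩
    · intro q hq
      rw [hA, Finset.mem_filter] at hq
      rw [Finset.mem_filter]
      refine ⟨Finset.mem_univ _, ?_⟩
      have := hq.2
      have h2 : (q.2 : ℕ) < L := q.2.isLt
      rw [Fin.le_def] at this
      simp only
      omega
    · intro r hr
      rw [Finset.mem_filter] at hr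
      rw [dif_pos hr.2]
      ext <;> simp
    · intro q hq
      rw [hA, Finset.mem_filter] at hq
      have hle := hq.2
      rw [Fin.le_def] at hle
      have h2 : (q.2 : ℕ) < L := q.2.isLt
      dsimp only
      rw [dif_pos (show (q.1 : ℕ) + ((q.2 : ℕ) - (q.1 : ℕ)) < L by omega)]
      refine Prod.ext rfl (Fin.ext ?_)
      show (q.1 : ℕ) + ((q.2 : ℕ) - (q.1 : ℕ)) = (q.2 : ℕ)
      omega
    · intro r hr
      rw [Finset.mem_filter] at hr
      have hlt := hr.2
      rw [dif_pos hlt]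
      set k := r.1 with hk
      set ℓ := r.2 with hℓ
      set m : Fin L := ⟨(ℓ : ℕ) + (k : ℕ), hlt⟩ with hm
      have hψX : bigPsi L X ℓ k
          = (if (k : ℕ) = 0 then ((Real.sqrt 2 / 2 : ℝ) : ℂ) else 1) * X ℓ m := by
        simp [bigPsi, psi, hlt, hm]
      have hψP : bigPsi L (vecMulVec (star p) p) ℓ k
          = (if (k : ℕ) = 0 then ((Real.sqrt 2 / 2 : ℝ) : ℂ) else 1) *
            ((starRingEnd ℂ) (p ℓ) * p m) := by
        simp [bigPsi, psi, hlt, hm, Matrix.vecMulVec_apply, Pi.star_apply, RCLike.star_def]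
      have hττ : (starRingEnd ℂ) (Complex.exp (Complex.I * ((ℓ : ℕ) : ℂ) * (ω : ℂ))) *
          Complex.exp (Complex.I * ((m : ℕ) : ℂ) * (ω : ℂ))
          = Complex.exp (Complex.I * ((k : ℕ) : ℂ) * (ω : ℂ)) := by
        have : ((m : ℕ) : ℂ) = (((ℓ : ℕ) + (k : ℕ) : ℕ) : ℂ) := by simp [hm]
        rw [this]
        exact hτconj (ℓ : ℕ) (k : ℕ)
      have hweq : w (ℓ, m) = if (k : ℕ) = 0 then (1/2 : ℂ) else 1 := by
        rw [hw]
        simp only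
        by_cases hk0 : (k : ℕ) = 0
        · rw [if_pos hk0, if_pos (by ext; simp [hm, hk0])]
        · rw [if_neg hk0, if_neg (by
            intro h
            apply hk0
            have := congrArg Fin.val h
            simp [hm] at this
            omega)]
      rw [hψX, hψP, hweq]
      simp only [hFdef, _root_.map_mul]
      rw [show (starRingEnd ℂ) (Complex.exp (Complex.I * ((ℓ : ℕ) : ℂ) * (ω : ℂ))) *
          (starRingEnd ℂ) (p ℓ) * X ℓ m *
            (Complex.exp (Complex.I * ((m : ℕ) : ℂ) * (ω : ℂ)) * p m)
          = ((starRingEnd ℂ) (Complex.exp (Complex.I * ((ℓ : ℕ) : ℂ) * (ω : ℂ))) *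
            Complex.exp (Complex.I * ((m : ℕ) : ℂ) * (ω : ℂ))) *
              ((starRingEnd ℂ) (p ℓ) * X ℓ m * p m) from by ring, hττ]
      rw [hk]
      by_cases hk0 : ((r.1 : Fin L) : ℕ) = 0
      · have hr2 : (Real.sqrt 2 / 2) * (Real.sqrt 2 / 2) = (1/2 : ℝ) := by
          rw [div_mul_div_comm, Real.mul_self_sqrt (by norm_num : (0:ℝ) ≤ 2)]
          norm_num
        have hs : ((Real.sqrt 2 / 2 : ℝ) : ℂ) * ((Real.sqrt 2 / 2 : ℝ) : ℂ) = (1/2 : ℂ) := by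
          rw [← Complex.ofReal_mul, hr2]
          norm_num
        simp only [if_pos hk0]
        linear_combination (Complex.exp (Complex.I * ((r.1 : ℕ) : ℂ) * (ω : ℂ)) *
          (X ℓ m * ((starRingEnd ℂ) (p ℓ) * p m))) * hs
      · simp only [if_neg hk0]
        ring
    -- end of hS_sum
  -- conj S as a weighted sum over the upper triangle, swapped
  have hS_conj : (starRingEnd ℂ) S = ∑ q ∈ A, w q * F q.swap := by
    rw [hS_sum, map_sum]
    refine Finset.sum_congr rfl fun q _ => ?_
    have hwc : (starRingEnd ℂ) (w q) = w q := by
      rw [hw]; by_cases h : q.1 = q.2 <;> simp [h, map_ofNat]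
    rw [_root_.map_mul, hwc]
    congr 1
    simp only [hFdef, _root_.map_mul, RingHom.id_apply, Complex.conj_conj, hXc, Prod.fst_swap,
      Prod.snd_swap, Prod.swap]
    ring
  rw [hLHS, hS_conj, hS_sum]
  -- split the full sum and the triangle sums
  have hAD : ∀ f : Fin L × Fin L → ℂ, ∑ q ∈ A, f q = ∑ q ∈ D, f q + ∑ q ∈ U, f q := by
    intro f
    rw [← Finset.sum_filter_add_sum_filter_not A (fun q => q.1 = q.2)]
    congr 1
    · rw [hA, hD, Finset.filter_filter]
      congr 1
      ext q
      simp only [Finset.mem_filter, Finset.mem_univ, true_and]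
      constructor
      · exact fun h => h.2
      · exact fun h => ⟨le_of_eq h, h⟩
    · rw [hA, hU, Finset.filter_filter]
      congr 1
      ext q
      simp only [Finset.mem_filter, Finset.mem_univ, true_and]
      constructor
      · exact fun h => lt_of_le_of_ne h.1 h.2
      · exact fun h => ⟨le_of_lt h, ne_of_lt h⟩
  have hsplitU : ∑ q : Fin L × Fin L, F q
      = ∑ q ∈ A, F q + ∑ q ∈ Finset.univ.filter (fun q : Fin L × Fin L => ¬ q.1 ≤ q.2), F q := by
    rw [hA, Finset.sum_filter_add_sum_filter_not]
  have hBswap : ∑ q ∈ Finset.univ.filter (fun q : Fin L × Fin L => ¬ q.1 ≤ q.2), F q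
      = ∑ q ∈ U, F q.swap := by
    refine Finset.sum_nbij' (i := Prod.swap) (j := Prod.swap) ?_ ?_ ?_ ?_ ?_
    · intro q hq
      rw [Finset.mem_filter] at hq
      rw [hU, Finset.mem_filter]
      exact ⟨Finset.mem_univ _, lt_of_not_ge hq.2⟩
    · intro q hq
      rw [hU, Finset.mem_filter] at hq
      rw [Finset.mem_filter]
      exact ⟨Finset.mem_univ _, not_le_of_gt hq.2⟩
    · intro q _; exact Prod.swap_swap q
    · intro q _; exact Prod.swap_swap q
    · intro q _; rw [Prod.swap_swap]
  -- diagonal facts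
  have hDiag : ∀ q ∈ D, w q * F q = (1/2 : ℂ) * F q ∧ w q * F q.swap = (1/2 : ℂ) * F q := by
    intro q hq
    rw [hD, Finset.mem_filter] at hq
    have heq : q.swap = q := by
      obtain ⟨a, b⟩ := q
      simp only at hq
      cases hq.2
      rfl
    constructor
    · rw [hw]; simp [hq.2]
    · rw [heq, hw]; simp [hq.2]
  have hUw : ∀ q ∈ U, w q = 1 := by
    intro q hq
    rw [hU, Finset.mem_filter] at hq
    rw [hw]
    simp [ne_of_lt hq.2]
  rw [hsplitU, hBswap, hAD F, hAD (fun q => w q * F q), hAD (fun q => w q * F q.swap)]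
  have h1 : ∑ q ∈ U, w q * F q = ∑ q ∈ U, F q :=
    Finset.sum_congr rfl fun q hq => by rw [hUw q hq, one_mul]
  have h2 : ∑ q ∈ U, w q * F q.swap = ∑ q ∈ U, F q.swap :=
    Finset.sum_congr rfl fun q hq => by rw [hUw q hq, one_mul]
  rw [Finset.sum_congr rfl (fun q hq => (hDiag q hq).1),
      Finset.sum_congr rfl (fun q hq => (hDiag q hq).2),
      h1, h2]
  rw [← Finset.mul_sum]
  ring
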